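/- Let n ≥ 0 and define F as the intermediate firing configuration: F(x,y) = 0 if x < 0 or y < 0, F(0,0) = 2^n, and F(x,y) = ⌊F(x-1,y)/2⌋ + ⌊F(x,y-1)/2⌋ otherwise. Then for every row m with 0 ≤ m < n and every vertex (x, m-x) in row m, the value F(x, m-x) is even; moreover F(0, n) = 1 is odd. Consequently, the closest row to the origin containing chips in the stable configuration (i.e., containing vertices with F odd) is row n. -/
import Mathlib


theorem stmt3 (n : ℕ) (F : ℤ → ℤ → ℕ)
    (hneg : ∀ x y : ℤ, x < 0 ∨ y < 0 → F x y = 0)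
    (hzero : F 0 0 = 2 ^ n)
    (hrec : ∀ x y : ℤ, 0 ≤ x → 0 ≤ y → ¬(x = 0 ∧ y = 0) →
      F x y = F (x - 1) y / 2 + F x (y - 1) / 2) :
    (∀ m : ℕ, m < n → ∀ x : ℤ, 0 ≤ x → x ≤ (m : ℤ) → Even (F x ((m : ℤ) - x))) ∧
    F 0 (n : ℤ) = 1 ∧ Odd (F 0 (n : ℤ)) := by
  have hdiv : ∀ a c : ℕ, 2 ^ (a + 1) * c / 2 = 2 ^ a * c := by
    intro a c
    rw [pow_succ, mul_comm (2^a) 2, mul_assoc, Nat.mul_div_cancel_left _ two_pos]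
  have key : ∀ m : ℕ, m ≤ n → ∀ x : ℤ, 0 ≤ x → x ≤ (m : ℤ) →
      F x ((m : ℤ) - x) = 2 ^ (n - m) * Nat.choose m x.toNat := by
    intro m
    induction m with
    | zero =>
      intro _ x hx hx'
      have hx0 : x = 0 := le_antisymm hx' hx
      subst hx0
      simpa using hzero
    | succ m ih =>
      intro hm x hx hx'
      have hm' : m ≤ n := Nat.le_of_succ_le hm
      have hnm : n - m = (n - (m + 1)) + 1 := by omega
      have hy : (0:ℤ) ≤ ((m + 1 : ℕ) : ℤ) - x := by push_cast; omega
      have hne : ¬(x = 0 ∧ ((m + 1 : ℕ) : ℤ) - x = 0) := by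
        push_cast; rintro ⟨h1, h2⟩; omega
      rw [hrec x _ hx hy hne]
      rcases eq_or_lt_of_le hx with hx0 | hx1
      · -- x = 0
        have hx0 : x = 0 := hx0.symm
        subst hx0
        have h1 : F (0 - 1) (((m + 1 : ℕ) : ℤ) - 0) = 0 := by
          apply hneg; left; norm_num
        have h2 : ((m + 1 : ℕ) : ℤ) - 0 - 1 = (m : ℤ) - 0 := by push_cast; ring
        rw [h1, h2, ih hm' 0 le_rfl (by positivity)]
        simp only [Int.toNat_zero, Nat.choose_zero_right, mul_one, hnm, pow_succ]
        omega
      · rcases eq_or_lt_of_le hx' with hxm | hxm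
        · -- x = m + 1
          have h1 : ((m + 1 : ℕ) : ℤ) - x = 0 := by omega
          rw [h1]
          have h3 : F x (0 - 1) = 0 := by
            apply hneg; right; norm_num
          have h4 : x - 1 = (m : ℤ) := by omega
          have h5 : (0:ℤ) = (m : ℤ) - (m : ℤ) := by ring
          rw [h3, h4, h5, ih hm' (m : ℤ) (by positivity) le_rfl]
          have h6 : ((m : ℤ)).toNat = m := by simp
          have h7 : (x).toNat = m + 1 := by omega
          rw [h6, h7, Nat.choose_self, Nat.choose_self, hnm, hdiv]
          simp
        · -- 1 ≤ x ≤ m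
          have hx1' : (1:ℤ) ≤ x := hx1
          have hxm' : x ≤ (m : ℤ) := by omega
          have h2 : ((m + 1 : ℕ) : ℤ) - x = (m : ℤ) - (x - 1) := by push_cast; ring
          have h3 : ((m + 1 : ℕ) : ℤ) - x - 1 = (m : ℤ) - x := by push_cast; ring
          rw [h3, ih hm' x hx hxm']
          rw [h2, ih hm' (x - 1) (by omega) (by omega)]
          obtain ⟨k, hk⟩ : ∃ k : ℕ, x.toNat = k + 1 := ⟨x.toNat - 1, by omega⟩
          have h4 : (x - 1).toNat = k := by omega
          rw [h4, hk, hnm, hdiv, hdiv, Nat.choose_succ_succ, Nat.mul_add]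
  have hF0n : F 0 (n : ℤ) = 1 := by
    have := key n le_rfl 0 le_rfl (by positivity)
    simpa using this
  refine ⟨?_, hF0n, by rw [hF0n]; exact odd_one⟩
  intro m hm x hx hx'
  rw [key m hm.le x hx hx']
  have : n - m = (n - m - 1) + 1 := by omega
  rw [this, pow_succ]
  exact ⟨2 ^ (n - m - 1) * Nat.choose m x.toNat, by ring⟩
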